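/- Rosenbaum–Rubin sufficiency of the propensity score: if (Y(0), Y(1)) ⫫ D | X, then (Y(0), Y(1)) ⫫ D | π(X), where π(X) = P(D=1|X). -/

import Mathlib

open MeasureTheory ProbabilityTheory

/-- Rosenbaum–Rubin sufficiency of the propensity score: if
`(Y(0), Y(1)) ⫫ D | X` then `(Y(0), Y(1)) ⫫ D | π(X)`, where
`π(X)` is a version of `P(D=1|X) = E[D|X]` given by a measurable `π`. -/
theorem propensity_score_sufficiency
    {Ω 𝒳 : Type*} [MeasurableSpace Ω] [StandardBorelSpace Ω] [MeasurableSpace 𝒳]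
    (μ : Measure Ω) [IsProbabilityMeasure μ]
    (D : Ω → ℝ) (X : Ω → 𝒳) (Y0 Y1 : Ω → ℝ)
    (hD : Measurable D) (hX : Measurable X)
    (hY0 : Measurable Y0) (hY1 : Measurable Y1)
    (hDbin : ∀ ω, D ω = 0 ∨ D ω = 1)
    (π : 𝒳 → ℝ) (hπm : Measurable π)
    (hπ : (fun ω => π (X ω)) =ᵐ[μ] μ[D | MeasurableSpace.comap X inferInstance])
    (hunconf : CondIndepFun (MeasurableSpace.comap X inferInstance) hX.comap_le
      (fun ω => (Y0 ω, Y1 ω)) D μ) :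
    CondIndepFun (MeasurableSpace.comap (fun ω => π (X ω)) inferInstance)
      ((hπm.comp hX).comap_le) (fun ω => (Y0 ω, Y1 ω)) D μ := by
  classical
  have hF : Measurable (fun ω => (Y0 ω, Y1 ω)) := hY0.prodMk hY1
  have hleX : MeasurableSpace.comap X inferInstance ≤ ‹MeasurableSpace Ω› := hX.comap_le
  have hleπΩ : MeasurableSpace.comap (fun ω => π (X ω)) inferInstance ≤ ‹MeasurableSpace Ω› :=
    (hπm.comp hX).comap_le
  have hle : MeasurableSpace.comap (fun ω => π (X ω)) inferInstance
      ≤ MeasurableSpace.comap X inferInstance := by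
    have : (fun ω => π (X ω)) = π ∘ X := rfl
    rw [this, ← MeasurableSpace.comap_comp]
    exact MeasurableSpace.comap_mono hπm.comap_le
  have hπXsm : StronglyMeasurable[MeasurableSpace.comap (fun ω => π (X ω)) inferInstance]
      (fun ω => π (X ω)) :=
    Measurable.stronglyMeasurable (Measurable.of_comap_le le_rfl)
  have hπXint : Integrable (fun ω => π (X ω)) μ := integrable_condExp.congr hπ.symm
  -- Step A: μ[D | mπ] =ᵐ π ∘ X
  have hA : μ[D | MeasurableSpace.comap (fun ω => π (X ω)) inferInstance] =ᵐ[μ]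
      (fun ω => π (X ω)) := by
    have h1 := condExp_condExp_of_le (f := D) (μ := μ) hle hleX
    have h2 := condExp_congr_ae
      (m := MeasurableSpace.comap (fun ω => π (X ω)) inferInstance) (μ := μ) hπ.symm
    have h3 : μ[(fun ω => π (X ω)) | MeasurableSpace.comap (fun ω => π (X ω)) inferInstance]
        = (fun ω => π (X ω)) := condExp_of_stronglyMeasurable hleπΩ hπXsm hπXint
    exact h1.symm.trans (h2.trans (by rw [h3]))
  have hB1 : Set.indicator (D ⁻¹' {1}) (fun _ => (1:ℝ)) = D := by
    funext ω
    rcases hDbin ω with h | h <;> simp [Set.indicator_apply, h]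
  -- Step B: key product lemma
  have key : ∀ s : Set (ℝ × ℝ), MeasurableSet s →
      (μ⟦(fun ω => (Y0 ω, Y1 ω)) ⁻¹' s ∩ D ⁻¹' {1} |
        MeasurableSpace.comap (fun ω => π (X ω)) inferInstance⟧) =ᵐ[μ]
      (fun ω => π (X ω)) * (μ⟦(fun ω => (Y0 ω, Y1 ω)) ⁻¹' s |
        MeasurableSpace.comap (fun ω => π (X ω)) inferInstance⟧) := by
    intro s hs
    have hAmeas : MeasurableSet ((fun ω => (Y0 ω, Y1 ω)) ⁻¹' s) := hF hs
    have hAint : Integrable (Set.indicator ((fun ω => (Y0 ω, Y1 ω)) ⁻¹' s) (fun _ => (1:ℝ))) μ :=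
      (integrable_const (1:ℝ)).indicator hAmeas
    have h1 := (condIndepFun_iff_condExp_inter_preimage_eq_mul hF hD).mp hunconf s {1} hs
        (measurableSet_singleton 1)
    have h2 : (μ⟦D ⁻¹' {1} | MeasurableSpace.comap X inferInstance⟧) =ᵐ[μ]
        (fun ω => π (X ω)) := by
      rw [hB1]; exact hπ.symm
    have h3 : (μ⟦(fun ω => (Y0 ω, Y1 ω)) ⁻¹' s ∩ D ⁻¹' {1} |
          MeasurableSpace.comap X inferInstance⟧) =ᵐ[μ]
        (fun ω => π (X ω)) * (μ⟦(fun ω => (Y0 ω, Y1 ω)) ⁻¹' s |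
          MeasurableSpace.comap X inferInstance⟧) := by
      filter_upwards [h1, h2] with ω h1ω h2ω
      simp only [Pi.mul_apply] at *
      rw [h1ω, h2ω, mul_comm]
    have hbdd : ∀ᵐ ω ∂μ, |(μ⟦(fun ω => (Y0 ω, Y1 ω)) ⁻¹' s |
        MeasurableSpace.comap X inferInstance⟧) ω| ≤ 1 := by
      have hub := condExp_mono (m := MeasurableSpace.comap X inferInstance) (μ := μ)
        hAint (integrable_const (1:ℝ))
        (Filter.Eventually.of_forall fun ω => Set.indicator_le_self' (fun _ _ => zero_le_one) ω)
      have hlb : (0 : Ω → ℝ) ≤ᵐ[μ] (μ⟦(fun ω => (Y0 ω, Y1 ω)) ⁻¹' s |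
          MeasurableSpace.comap X inferInstance⟧) :=
        condExp_nonneg (Filter.Eventually.of_forall fun ω =>
          Set.indicator_nonneg (fun _ _ => zero_le_one) ω)
      have hc : μ[(fun _ => (1:ℝ)) | MeasurableSpace.comap X inferInstance] = fun _ => (1:ℝ) :=
        condExp_const hleX 1
      filter_upwards [hub, hlb] with ω h1ω h2ω
      simp only [Pi.zero_apply] at h2ω
      rw [abs_le]
      refine ⟨by linarith, ?_⟩
      have := h1ω; rw [hc] at this; exact this
    have hprodint : Integrable ((fun ω => π (X ω)) * (μ⟦(fun ω => (Y0 ω, Y1 ω)) ⁻¹' s |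
        MeasurableSpace.comap X inferInstance⟧)) μ := by
      refine Integrable.mono' hπXint.abs ?_ ?_
      · exact ((hπm.comp hX).aestronglyMeasurable).mul
          (stronglyMeasurable_condExp.mono hleX).aestronglyMeasurable
      · filter_upwards [hbdd] with ω hω
        simp only [Pi.mul_apply, Pi.abs_apply, Real.norm_eq_abs, abs_mul]
        calc |π (X ω)| * |(μ⟦(fun ω => (Y0 ω, Y1 ω)) ⁻¹' s |
              MeasurableSpace.comap X inferInstance⟧) ω| ≤ |π (X ω)| * 1 :=
              mul_le_mul_of_nonneg_left hω (abs_nonneg _)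
          _ = |π (X ω)| := mul_one _
    calc (μ⟦(fun ω => (Y0 ω, Y1 ω)) ⁻¹' s ∩ D ⁻¹' {1} |
            MeasurableSpace.comap (fun ω => π (X ω)) inferInstance⟧)
        =ᵐ[μ] μ[(μ⟦(fun ω => (Y0 ω, Y1 ω)) ⁻¹' s ∩ D ⁻¹' {1} |
            MeasurableSpace.comap X inferInstance⟧) |
            MeasurableSpace.comap (fun ω => π (X ω)) inferInstance] :=
          (condExp_condExp_of_le (μ := μ) hle hleX).symm
      _ =ᵐ[μ] μ[(fun ω => π (X ω)) * (μ⟦(fun ω => (Y0 ω, Y1 ω)) ⁻¹' s |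
            MeasurableSpace.comap X inferInstance⟧) |
            MeasurableSpace.comap (fun ω => π (X ω)) inferInstance] := condExp_congr_ae h3
      _ =ᵐ[μ] (fun ω => π (X ω)) * μ[(μ⟦(fun ω => (Y0 ω, Y1 ω)) ⁻¹' s |
            MeasurableSpace.comap X inferInstance⟧) |
            MeasurableSpace.comap (fun ω => π (X ω)) inferInstance] :=
          condExp_mul_of_stronglyMeasurable_left hπXsm hprodint integrable_condExp
      _ =ᵐ[μ] (fun ω => π (X ω)) * (μ⟦(fun ω => (Y0 ω, Y1 ω)) ⁻¹' s |
            MeasurableSpace.comap (fun ω => π (X ω)) inferInstance⟧) := by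
          have := condExp_condExp_of_le
            (f := Set.indicator ((fun ω => (Y0 ω, Y1 ω)) ⁻¹' s) (fun _ => (1:ℝ))) (μ := μ) hle hleX
          filter_upwards [this] with ω hω
          simp only [Pi.mul_apply, hω]
  -- conclude
  rw [condIndepFun_iff_condExp_inter_preimage_eq_mul hF hD]
  intro s t hs ht
  have hBmeas : MeasurableSet (D ⁻¹' ({1} : Set ℝ)) := hD (measurableSet_singleton 1)
  have hAmeas : MeasurableSet ((fun ω => (Y0 ω, Y1 ω)) ⁻¹' s) := hF hs
  have hA2 : (μ⟦D ⁻¹' ({1} : Set ℝ) |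
      MeasurableSpace.comap (fun ω => π (X ω)) inferInstance⟧) =ᵐ[μ] (fun ω => π (X ω)) := by
    rw [hB1]; exact hA
  by_cases h1 : (1:ℝ) ∈ t <;> by_cases h0 : (0:ℝ) ∈ t
  · -- t contains both 0 and 1 : D ⁻¹' t = univ
    have hBt : D ⁻¹' t = Set.univ := by
      ext ω; rcases hDbin ω with h | h <;> simp [h, h0, h1]
    have huniv : (μ⟦(Set.univ : Set Ω) |
        MeasurableSpace.comap (fun ω => π (X ω)) inferInstance⟧) = fun _ => (1:ℝ) := by
      rw [Set.indicator_univ]; exact condExp_const hleπΩ 1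
    rw [hBt, Set.inter_univ, huniv]
    filter_upwards with ω
    simp
  · -- t contains 1 but not 0 : D ⁻¹' t = D ⁻¹' {1}
    have hBt : D ⁻¹' t = D ⁻¹' ({1} : Set ℝ) := by
      ext ω; rcases hDbin ω with h | h <;> simp [h, h0, h1]
    rw [hBt]
    filter_upwards [key s hs, hA2] with ω hk hω
    simp only [Pi.mul_apply] at hk
    rw [hk, hω, mul_comm]
  · -- t contains 0 but not 1 : D ⁻¹' t = (D ⁻¹' {1})ᶜ
    have hBt : D ⁻¹' t = (D ⁻¹' ({1} : Set ℝ))ᶜ := by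
      ext ω; rcases hDbin ω with h | h <;> simp [h, h0, h1]
    have hindAB : Set.indicator ((fun ω => (Y0 ω, Y1 ω)) ⁻¹' s ∩ (D ⁻¹' ({1} : Set ℝ))ᶜ)
        (fun _ => (1:ℝ))
        = Set.indicator ((fun ω => (Y0 ω, Y1 ω)) ⁻¹' s) (fun _ => (1:ℝ))
          - Set.indicator ((fun ω => (Y0 ω, Y1 ω)) ⁻¹' s ∩ D ⁻¹' ({1} : Set ℝ))
            (fun _ => (1:ℝ)) := by
      funext ω
      by_cases ha : ω ∈ (fun ω => (Y0 ω, Y1 ω)) ⁻¹' s <;>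
        by_cases hb : ω ∈ D ⁻¹' ({1} : Set ℝ) <;>
        simp [Set.indicator_apply, ha, hb]
    have hindBc : Set.indicator ((D ⁻¹' ({1} : Set ℝ))ᶜ) (fun _ => (1:ℝ))
        = (fun _ => (1:ℝ)) - Set.indicator (D ⁻¹' ({1} : Set ℝ)) (fun _ => (1:ℝ)) := by
      funext ω
      by_cases hb : ω ∈ D ⁻¹' ({1} : Set ℝ) <;> simp [Set.indicator_apply, hb]
    have hsub1 : (μ⟦(fun ω => (Y0 ω, Y1 ω)) ⁻¹' s ∩ (D ⁻¹' ({1} : Set ℝ))ᶜ |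
        MeasurableSpace.comap (fun ω => π (X ω)) inferInstance⟧) =ᵐ[μ]
        (μ⟦(fun ω => (Y0 ω, Y1 ω)) ⁻¹' s |
          MeasurableSpace.comap (fun ω => π (X ω)) inferInstance⟧)
        - (μ⟦(fun ω => (Y0 ω, Y1 ω)) ⁻¹' s ∩ D ⁻¹' ({1} : Set ℝ) |
          MeasurableSpace.comap (fun ω => π (X ω)) inferInstance⟧) := by
      rw [hindAB]
      exact condExp_sub ((integrable_const (1:ℝ)).indicator hAmeas)
        ((integrable_const (1:ℝ)).indicator (hAmeas.inter hBmeas)) _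
    have hsub2 : (μ⟦(D ⁻¹' ({1} : Set ℝ))ᶜ |
        MeasurableSpace.comap (fun ω => π (X ω)) inferInstance⟧) =ᵐ[μ]
        (fun _ => (1:ℝ)) - (μ⟦D ⁻¹' ({1} : Set ℝ) |
          MeasurableSpace.comap (fun ω => π (X ω)) inferInstance⟧) := by
      rw [hindBc]
      refine (condExp_sub (integrable_const (1:ℝ))
        ((integrable_const (1:ℝ)).indicator hBmeas) _).trans ?_
      have hc : μ[(fun _ => (1:ℝ)) |
          MeasurableSpace.comap (fun ω => π (X ω)) inferInstance] = fun _ => (1:ℝ) :=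
        condExp_const hleπΩ 1
      rw [hc]
    rw [hBt]
    filter_upwards [hsub1, hsub2, key s hs, hA2] with ω hω1 hω2 hk hω3
    simp only [Pi.sub_apply, Pi.mul_apply] at *
    rw [hω1, hω2, hk, hω3]
    ring
  · -- t contains neither : D ⁻¹' t = ∅
    have hBt : D ⁻¹' t = (∅ : Set Ω) := by
      ext ω; rcases hDbin ω with h | h <;> simp [h, h0, h1]
    rw [hBt, Set.inter_empty]
    have hz : (μ⟦(∅ : Set Ω) |
        MeasurableSpace.comap (fun ω => π (X ω)) inferInstance⟧) = 0 := by
      rw [Set.indicator_empty]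
      exact condExp_zero
    rw [hz]
    filter_upwards with ω
    simp
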